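/- arXiv:1302.0048 — 2 statements merged into one kernel-verified Lean document; each statement's English description precedes it below -/
import Mathlib

section
/- Let $\kk$ be a field, let $n, d, \ell$ be natural numbers, let $L$ be an $\ell \times n$ matrix with entries in $\kk$, and let $p, q \in \kk^n$ with $q_i \neq 0$ for all $i$. Let $T : \kk^n \times \kk^n \to \kk^\ell$ be the linear map $T(y, \eta) = L(q)\,y + L(p)\,\eta$, where $L(p)$ (respectively $L(q)$) denotes the matrix obtained from $L$ by multiplying its $i$-th column by $p_i$ (respectively $q_i$). Then $\ker T + (\kk^n \times \{0\}) = \kk^n \times \kk^n$; equivalently, the projection of $\ker T$ onto the second factor $\kk^n$ is surjective. -/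
/-- Let `k` be a field, `L` an `ℓ × n` matrix over `k`, and
`p q : kⁿ` with all coordinates of `q` nonzero.  Let `T : kⁿ × kⁿ → k^ℓ` be the
linear map `T (y, η) = L(q) y + L(p) η`, where `L(p)` (resp. `L(q)`) is the
matrix obtained from `L` by scaling its `i`-th column by `pᵢ` (resp. `qᵢ`),
i.e. `L(p) = L * diagonal p`.  Then `ker T + (kⁿ × {0}) = kⁿ × kⁿ`. -/
theorem ker_plus_fst_eq_top (k : Type*) [Field k] (n ℓ : ℕ)
    (L : Matrix (Fin ℓ) (Fin n) k) (p q : Fin n → k) (hq : ∀ i, q i ≠ 0) :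
    LinearMap.ker ((Matrix.toLin' (L * Matrix.diagonal q)).coprod
        (Matrix.toLin' (L * Matrix.diagonal p))) ⊔
      Submodule.fst k (Fin n → k) (Fin n → k) = ⊤ := by
  rw [eq_top_iff]
  rintro ⟨y, η⟩ -
  set x : Fin n → k := fun i => -((q i)⁻¹ * (p i * η i)) with hx
  have hker : ((x, η) : (Fin n → k) × (Fin n → k)) ∈
      LinearMap.ker ((Matrix.toLin' (L * Matrix.diagonal q)).coprod
        (Matrix.toLin' (L * Matrix.diagonal p))) := by
    rw [LinearMap.mem_ker, LinearMap.coprod_apply]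
    simp only [Matrix.toLin'_apply, ← Matrix.mulVec_mulVec]
    rw [← Matrix.mulVec_add]
    have : (Matrix.diagonal q).mulVec x + (Matrix.diagonal p).mulVec η = 0 := by
      funext i
      simp only [Matrix.mulVec_diagonal, Pi.add_apply, Pi.zero_apply, hx]
      rw [mul_neg, ← mul_assoc, mul_inv_cancel₀ (hq i), one_mul, neg_add_cancel]
    rw [this, Matrix.mulVec_zero]
  have : ((y, η) : (Fin n → k) × (Fin n → k)) = (x, η) + (y - x, 0) := by
    simp
  rw [this]
  exact Submodule.add_mem_sup hker (by simp [Submodule.fst])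
end

section
/- Let $\kk$ be a field and $A$ a $d \times n$ integer matrix. Let $\hat{A}$ be the $(d+1) \times (n+1)$ integer matrix obtained from $A$ by adding a row of $1$'s across the top and then adding the column $(1, 0, \dots, 0)^T$ as the leftmost column. Then there is a $\kk$-algebra isomorphism $\kk[\xi_1, \dots, \xi_n]/\operatorname{in}(I_A) \cong \kk[\xi_0, \xi_1, \dots, \xi_n]/(I_{\hat{A}} + \langle \xi_0 \rangle)$, where $\operatorname{in}(I_A)$ is the initial ideal of $I_A$ with respect to total degree. -/
open MvPolynomial

/-- The toric ideal of an integer matrix `A`, generated by the binomials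
`ξ^u - ξ^v` over pairs of exponent vectors `u, v` with `Au = Av`. -/
noncomputable def toricIdeal (k : Type*) [Field k] {d n : ℕ}
    (A : Matrix (Fin d) (Fin n) ℤ) {σ : Type*} (ξvar : Fin n → σ) :
    Ideal (MvPolynomial σ k) :=
  Ideal.span { f | ∃ u v : Fin n → ℕ,
    A.mulVec (fun j => (u j : ℤ)) = A.mulVec (fun j => (v j : ℤ)) ∧
    f = (∏ j, X (ξvar j) ^ u j) - ∏ j, X (ξvar j) ^ v j }

/-- The initial ideal of an ideal `I` of a polynomial ring with respect to the
standard total-degree filtration: the ideal generated by the top-degree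
homogeneous components of all elements of `I`. -/
noncomputable def initialIdeal {k : Type*} [Field k] {σ : Type*}
    (I : Ideal (MvPolynomial σ k)) : Ideal (MvPolynomial σ k) :=
  Ideal.span { g | ∃ f ∈ I, g = homogeneousComponent f.totalDegree f }

/-- The homogenization `Â` of `A`: a row of `1`s is added across the top of
`A`, and then the column `(1,0,…,0)ᵀ` is added as the leftmost column. -/
def matrixHat {d n : ℕ} (A : Matrix (Fin d) (Fin n) ℤ) :
    Matrix (Fin (d + 1)) (Fin (n + 1)) ℤ :=
  Matrix.of (Fin.cons (fun _ => 1) (fun i => Fin.cons 0 (fun j => A i j)))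

namespace St6
variable {k : Type*} [Field k] {d m : ℕ}

def wt (B : Matrix (Fin d) (Fin m) ℤ) (u : Fin m →₀ ℕ) : Fin d → ℤ :=
  B.mulVec fun j => (u j : ℤ)

lemma wt_add (B : Matrix (Fin d) (Fin m) ℤ) (u v : Fin m →₀ ℕ) :
    wt B (u + v) = wt B u + wt B v := by
  unfold wt
  have h : (fun j => (((u+v) j : ℕ) : ℤ)) = (fun j => ((u j : ℕ):ℤ)) + (fun j => ((v j : ℕ):ℤ)) := by
    funext j; simp [Finsupp.add_apply]
  rw [h, Matrix.mulVec_add]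

noncomputable def fib (B : Matrix (Fin d) (Fin m) ℤ) (t : Fin d → ℤ)
    (f : MvPolynomial (Fin m) k) : k :=
  ∑ u ∈ f.support, if wt B u = t then coeff u f else 0

lemma fib_eq_sum_subset (B : Matrix (Fin d) (Fin m) ℤ) (t : Fin d → ℤ)
    (f : MvPolynomial (Fin m) k) {s : Finset (Fin m →₀ ℕ)} (hs : f.support ⊆ s) :
    fib B t f = ∑ u ∈ s, if wt B u = t then coeff u f else 0 := by
  refine Finset.sum_subset hs ?_
  intro u _ hu
  simp [MvPolynomial.notMem_support_iff.mp hu]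

@[simp] lemma fib_zero (B : Matrix (Fin d) (Fin m) ℤ) (t : Fin d → ℤ) :
    fib B t (0 : MvPolynomial (Fin m) k) = 0 := by simp [fib]

lemma fib_add (B : Matrix (Fin d) (Fin m) ℤ) (t : Fin d → ℤ)
    (f g : MvPolynomial (Fin m) k) :
    fib B t (f + g) = fib B t f + fib B t g := by
  classical
  rw [fib_eq_sum_subset B t (f+g) (s := f.support ∪ g.support) (MvPolynomial.support_add),
    fib_eq_sum_subset B t f (s := f.support ∪ g.support) Finset.subset_union_left,
    fib_eq_sum_subset B t g (s := f.support ∪ g.support) Finset.subset_union_right,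
    ← Finset.sum_add_distrib]
  refine Finset.sum_congr rfl fun u _ => ?_
  by_cases h : wt B u = t <;> simp [h, MvPolynomial.coeff_add]

lemma fib_smul (B : Matrix (Fin d) (Fin m) ℤ) (t : Fin d → ℤ) (c : k)
    (f : MvPolynomial (Fin m) k) :
    fib B t (c • f) = c * fib B t f := by
  rw [fib_eq_sum_subset B t (c • f) (s := f.support) (MvPolynomial.support_smul),
    fib, Finset.mul_sum]
  refine Finset.sum_congr rfl fun u _ => ?_
  by_cases h : wt B u = t <;> simp [h]

lemma fib_neg (B : Matrix (Fin d) (Fin m) ℤ) (t : Fin d → ℤ)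
    (f : MvPolynomial (Fin m) k) : fib B t (-f) = - fib B t f := by
  have := fib_smul B t (-1 : k) f
  simpa using this

lemma fib_sub (B : Matrix (Fin d) (Fin m) ℤ) (t : Fin d → ℤ)
    (f g : MvPolynomial (Fin m) k) :
    fib B t (f - g) = fib B t f - fib B t g := by
  rw [sub_eq_add_neg, fib_add, fib_neg, sub_eq_add_neg]

lemma fib_monomial (B : Matrix (Fin d) (Fin m) ℤ) (t : Fin d → ℤ)
    (u : Fin m →₀ ℕ) (c : k) :
    fib B t (monomial u c) = if wt B u = t then c else 0 := by
  classical
  by_cases hc : c = 0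
  · simp [hc]
  · rw [fib, MvPolynomial.support_monomial, if_neg hc]
    simp [MvPolynomial.coeff_monomial]

lemma fib_finsum (B : Matrix (Fin d) (Fin m) ℤ) (t : Fin d → ℤ)
    {α : Type*} (s : Finset α) (g : α → MvPolynomial (Fin m) k) :
    fib B t (∑ a ∈ s, g a) = ∑ a ∈ s, fib B t (g a) := by
  classical
  induction s using Finset.cons_induction with
  | empty => simp
  | cons a s ha ih => rw [Finset.sum_cons, fib_add, ih, Finset.sum_cons]

lemma fib_monomial_mul (B : Matrix (Fin d) (Fin m) ℤ) (t : Fin d → ℤ)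
    (w : Fin m →₀ ℕ) (c : k) (f : MvPolynomial (Fin m) k) :
    fib B t (monomial w c * f) = c * fib B (t - wt B w) f := by
  classical
  conv_lhs => rw [f.as_sum, Finset.mul_sum]
  rw [fib_finsum]
  simp_rw [MvPolynomial.monomial_mul, fib_monomial]
  rw [fib, Finset.mul_sum]
  refine Finset.sum_congr rfl fun v _ => ?_
  have hiff : wt B (w + v) = t ↔ wt B v = t - wt B w := by
    rw [wt_add]
    constructor
    · intro h; rw [← h]; abel
    · intro h; rw [h]; abel
  by_cases h : wt B v = t - wt B w
  · rw [if_pos (hiff.mpr h), if_pos h]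
  · rw [if_neg (fun hh => h (hiff.mp hh)), if_neg h, mul_zero]

/-- the binomial generating set, in Finsupp form -/
def TS (B : Matrix (Fin d) (Fin m) ℤ) : Set (MvPolynomial (Fin m) k) :=
  { f | ∃ u v : Fin m →₀ ℕ, wt B u = wt B v ∧ f = monomial u 1 - monomial v 1 }

theorem fib_eq_zero_of_mem (B : Matrix (Fin d) (Fin m) ℤ)
    {f : MvPolynomial (Fin m) k} (hf : f ∈ Ideal.span (TS B (k := k)))
    (t : Fin d → ℤ) : fib B t f = 0 := by
  classical
  let K : Ideal (MvPolynomial (Fin m) k) :=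
    { carrier := {g | ∀ t, fib B t g = 0}
      zero_mem' := by intro t; simp
      add_mem' := fun ha hb t => by rw [fib_add, ha t, hb t, add_zero]
      smul_mem' := by
        intro r g hg
        rw [smul_eq_mul]
        induction r using MvPolynomial.induction_on' with
        | monomial w c => intro t; rw [fib_monomial_mul, hg, mul_zero]
        | add p q hp hq => intro t; rw [add_mul, fib_add, hp t, hq t, add_zero] }
  have hle : Ideal.span (TS B (k := k)) ≤ K := by
    rw [Ideal.span_le]
    rintro g ⟨u, v, huv, rfl⟩ t
    rw [fib_sub, fib_monomial, fib_monomial, huv, sub_self]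
  exact hle hf t

theorem mem_of_fib_eq_zero (B : Matrix (Fin d) (Fin m) ℤ) :
    ∀ (N : ℕ) (f : MvPolynomial (Fin m) k), f.support.card ≤ N →
    (∀ t, fib B t f = 0) → f ∈ Ideal.span (TS B (k := k)) := by
  classical
  intro N
  induction N with
  | zero =>
    intro f hcard _
    have h0 : f.support = ∅ := Finset.card_eq_zero.mp (Nat.le_zero.mp hcard)
    rw [MvPolynomial.support_eq_empty.mp h0]
    exact Ideal.zero_mem _
  | succ N ih =>
    intro f hcard hfib
    by_cases h0 : f = 0
    · rw [h0]; exact Ideal.zero_mem _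
    obtain ⟨u, hu⟩ : f.support.Nonempty :=
      Finset.nonempty_iff_ne_empty.mpr (fun h => h0 (MvPolynomial.support_eq_empty.mp h))
    set t := wt B u with ht
    set F := f.support.filter (fun v => wt B v = t) with hF
    have huF : u ∈ F := Finset.mem_filter.mpr ⟨hu, rfl⟩
    set p : MvPolynomial (Fin m) k := ∑ v ∈ F, monomial v (coeff v f) with hp
    have hsum : ∑ v ∈ F, coeff v f = 0 := by
      have h1 : ∑ v ∈ F, coeff v f
          = ∑ v ∈ f.support, if wt B v = t then coeff v f else 0 :=
        Finset.sum_filter _ _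
      rw [h1]; exact hfib t
    have hpmem : p ∈ Ideal.span (TS B (k := k)) := by
      have hterm : ∀ v, (coeff v f) • ((monomial v 1 : MvPolynomial (Fin m) k) - monomial u 1)
          = monomial v (coeff v f) - monomial u (coeff v f) := by
        intro v; rw [smul_sub]; simp [MvPolynomial.smul_monomial]
      have hcu : ∑ v ∈ F.erase u, coeff v f = - coeff u f := by
        have hsum' := hsum
        rw [← Finset.add_sum_erase _ _ huF] at hsum'
        exact eq_neg_of_add_eq_zero_right hsum'
      have key : p = ∑ v ∈ F.erase u,
          (coeff v f) • ((monomial v 1 : MvPolynomial (Fin m) k) - monomial u 1) := by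
        simp_rw [hterm]
        rw [Finset.sum_sub_distrib, ← map_sum (monomial u), hcu, map_neg, sub_neg_eq_add,
          hp, ← Finset.add_sum_erase _ _ huF, add_comm]
      rw [key]
      refine Ideal.sum_mem _ fun v hv => ?_
      rw [MvPolynomial.smul_eq_C_mul]
      refine Ideal.mul_mem_left _ _ (Ideal.subset_span ?_)
      exact ⟨v, u, (Finset.mem_filter.mp (Finset.mem_of_mem_erase hv)).2, rfl⟩
    set g := f - p with hg
    have hcp : ∀ v, coeff v p = if v ∈ F then coeff v f else 0 := by
      intro v
      rw [hp, MvPolynomial.coeff_sum]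
      simp_rw [MvPolynomial.coeff_monomial]
      exact Finset.sum_ite_eq' F v (fun w => coeff w f)
    have hgsupp : g.support ⊆ f.support \ F := by
      intro v hvg
      rw [MvPolynomial.mem_support_iff] at hvg
      by_cases hvF : v ∈ F
      · exfalso; apply hvg
        rw [hg, MvPolynomial.coeff_sub, hcp, if_pos hvF, sub_self]
      · have hcoef : coeff v g = coeff v f := by
          rw [hg, MvPolynomial.coeff_sub, hcp, if_neg hvF, sub_zero]
        rw [hcoef] at hvg
        exact Finset.mem_sdiff.mpr ⟨MvPolynomial.mem_support_iff.mpr hvg, hvF⟩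
    have hcard' : g.support.card ≤ N := by
      have h1 : g.support.card ≤ (f.support \ F).card := Finset.card_le_card hgsupp
      have h2 : (f.support \ F).card < f.support.card :=
        Finset.card_lt_card (Finset.sdiff_ssubset (Finset.filter_subset _ _) ⟨u, huF⟩)
      omega
    have hgfib : ∀ t', fib B t' g = 0 := by
      intro t'
      rw [hg, fib_sub, hfib t', zero_sub, neg_eq_zero, hp, fib_finsum]
      simp_rw [fib_monomial]
      by_cases ht' : t' = t
      · subst ht'
        refine (Finset.sum_congr rfl fun v hv => if_pos (Finset.mem_filter.mp hv).2).trans hsum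
      · refine Finset.sum_eq_zero fun v hv => if_neg ?_
        rw [(Finset.mem_filter.mp hv).2]
        exact fun hh => ht' hh.symm
    have hgmem := ih g hcard' hgfib
    have hfg : f = g + p := by rw [hg]; ring
    rw [hfg]
    exact Ideal.add_mem _ hgmem hpmem

theorem mem_span_TS_iff (B : Matrix (Fin d) (Fin m) ℤ) (f : MvPolynomial (Fin m) k) :
    f ∈ Ideal.span (TS B (k := k)) ↔ ∀ t, fib B t f = 0 :=
  ⟨fun h t => fib_eq_zero_of_mem B h t,
   fun h => mem_of_fib_eq_zero B f.support.card f le_rfl h⟩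

lemma prod_X_pow (u : Fin m → ℕ) :
    (∏ j, (X j : MvPolynomial (Fin m) k) ^ u j)
      = monomial (Finsupp.equivFunOnFinite.symm u) 1 := by
  rw [MvPolynomial.monomial_eq, Finsupp.prod_fintype]
  · simp
  · intro i; exact pow_zero _

def dg {m : ℕ} (s : Fin m →₀ ℕ) : ℕ := s.sum fun _ e => e

lemma dg_eq_sum {m : ℕ} (s : Fin m →₀ ℕ) : dg s = ∑ j, s j := by
  rw [dg, Finsupp.sum_fintype]
  intro i; rfl

lemma dg_eq_degree {m : ℕ} (s : Fin m →₀ ℕ) : dg s = Finsupp.degree s := rfl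

lemma toricIdeal_eq_span_TS (B : Matrix (Fin d) (Fin m) ℤ) :
    toricIdeal k B (id : Fin m → Fin m) = Ideal.span (TS B (k := k)) := by
  unfold toricIdeal TS
  congr 1
  ext f
  constructor
  · rintro ⟨u, v, huv, rfl⟩
    refine ⟨Finsupp.equivFunOnFinite.symm u, Finsupp.equivFunOnFinite.symm v, ?_, ?_⟩
    · unfold wt
      simpa [Finsupp.equivFunOnFinite_symm_coe] using huv
    · simp only [id_eq]
      rw [prod_X_pow, prod_X_pow]
  · rintro ⟨u, v, huv, rfl⟩
    refine ⟨(u : Fin m → ℕ), (v : Fin m → ℕ), huv, ?_⟩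
    simp only [id_eq]
    rw [prod_X_pow, prod_X_pow, Finsupp.equivFunOnFinite_symm_coe,
      Finsupp.equivFunOnFinite_symm_coe]

lemma hc_monomial (D : ℕ) (s : Fin m →₀ ℕ) (c : k) :
    homogeneousComponent D (monomial s c)
      = if dg s = D then monomial s c else 0 := by
  classical
  ext u
  rw [coeff_homogeneousComponent]
  by_cases hu : s = u
  · subst hu
    by_cases h : dg s = D
    · rw [if_pos, if_pos h]
      rw [← dg_eq_degree, h]
    · rw [if_neg, if_neg h, MvPolynomial.coeff_zero]
      rw [← dg_eq_degree]; exact h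
  · by_cases h : Finsupp.degree u = D <;>
      by_cases h' : dg s = D <;>
      simp [h, h', MvPolynomial.coeff_monomial, hu]

lemma totalDegree_binom {u v : Fin m →₀ ℕ} (huv : u ≠ v) (h : dg v ≤ dg u) :
    ((monomial u (1:k)) - monomial v 1).totalDegree = dg u := by
  apply le_antisymm
  · rw [sub_eq_add_neg]
    refine le_trans (MvPolynomial.totalDegree_add _ _) ?_
    rw [MvPolynomial.totalDegree_neg, MvPolynomial.totalDegree_monomial _ (one_ne_zero (α := k)),
      MvPolynomial.totalDegree_monomial _ (one_ne_zero (α := k))]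
    exact max_le le_rfl h
  · refine MvPolynomial.le_totalDegree (s := u) ?_
    rw [MvPolynomial.mem_support_iff, MvPolynomial.coeff_sub, MvPolynomial.coeff_monomial,
      MvPolynomial.coeff_monomial, if_pos rfl, if_neg (fun hh => huv hh.symm), sub_zero]
    exact one_ne_zero
section Hat
variable {n : ℕ}

noncomputable def emb (a : ℕ) (s : Fin n →₀ ℕ) : Fin (n+1) →₀ ℕ :=
  Finsupp.equivFunOnFinite.symm (Fin.cons a s)

@[simp] lemma emb_zero (a : ℕ) (s : Fin n →₀ ℕ) : emb a s 0 = a := by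
  simp [emb]

@[simp] lemma emb_succ (a : ℕ) (s : Fin n →₀ ℕ) (j : Fin n) : emb a s j.succ = s j := by
  simp [emb]

lemma emb_tail (u : Fin (n+1) →₀ ℕ) :
    emb (u 0) (Finsupp.equivFunOnFinite.symm fun j => u j.succ) = u := by
  unfold emb
  have h : (Fin.cons (u 0) ⇑(Finsupp.equivFunOnFinite.symm fun j => u j.succ)
      : Fin (n+1) → ℕ) = ⇑u := by
    funext i
    refine Fin.cases ?_ ?_ i
    · rw [Fin.cons_zero]
    · intro j
      rw [Fin.cons_succ]
      simp
  rw [h, Finsupp.equivFunOnFinite_symm_coe]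

lemma matrixHat_zero (A : Matrix (Fin d) (Fin n) ℤ) (j : Fin (n+1)) :
    matrixHat A 0 j = 1 := rfl

lemma matrixHat_succ_zero (A : Matrix (Fin d) (Fin n) ℤ) (i : Fin d) :
    matrixHat A i.succ 0 = 0 := by
  simp [matrixHat]

lemma matrixHat_succ_succ (A : Matrix (Fin d) (Fin n) ℤ) (i : Fin d) (j : Fin n) :
    matrixHat A i.succ j.succ = A i j := by
  simp [matrixHat]

lemma wt_apply (B : Matrix (Fin d) (Fin m) ℤ) (u : Fin m →₀ ℕ) (i : Fin d) :
    wt B u i = ∑ j, B i j * (u j : ℤ) := rfl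

lemma wt_hat (A : Matrix (Fin d) (Fin n) ℤ) (a : ℕ) (s : Fin n →₀ ℕ) :
    wt (matrixHat A) (emb a s) = Fin.cons ((a : ℤ) + (dg s : ℤ)) (wt A s) := by
  funext i
  refine Fin.cases ?_ ?_ i
  · rw [Fin.cons_zero, wt_apply, Fin.sum_univ_succ]
    simp only [matrixHat_zero, one_mul, emb_zero, emb_succ]
    rw [dg_eq_sum]
    push_cast
    ring
  · intro i'
    rw [Fin.cons_succ, wt_apply, Fin.sum_univ_succ]
    simp only [matrixHat_succ_zero, matrixHat_succ_succ, zero_mul, emb_succ, zero_add]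
    rw [wt_apply]

variable (k n) in
noncomputable def phi : MvPolynomial (Fin (n+1)) k →ₐ[k] MvPolynomial (Fin n) k :=
  aeval (Fin.cons 0 X)

lemma phi_monomial (a : ℕ) (s : Fin n →₀ ℕ) (c : k) :
    phi k n (monomial (emb a s) c) = if a = 0 then monomial s c else 0 := by
  rw [phi, aeval_monomial, Finsupp.prod_fintype]
  swap
  · intro i; exact pow_zero _
  rw [Fin.prod_univ_succ]
  simp only [emb_zero, emb_succ, Fin.cons_zero, Fin.cons_succ]
  by_cases ha : a = 0
  · rw [ha, pow_zero, one_mul, if_pos rfl, prod_X_pow, Finsupp.equivFunOnFinite_symm_coe,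
      MvPolynomial.algebraMap_eq, MvPolynomial.C_mul_monomial, mul_one]
  · rw [zero_pow ha, zero_mul, mul_zero, if_neg ha]

lemma phi_X_zero : phi k n (X 0) = 0 := by
  rw [phi, aeval_X, Fin.cons_zero]

lemma phi_X_succ (j : Fin n) : phi k n (X j.succ) = X j := by
  rw [phi, aeval_X, Fin.cons_succ]

lemma phi_surjective : Function.Surjective (phi k n) := by
  intro p
  refine ⟨rename Fin.succ p, ?_⟩
  rw [phi, aeval_rename]
  have h : (Fin.cons 0 X : Fin (n+1) → MvPolynomial (Fin n) k) ∘ Fin.succ = X := by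
    funext j; exact Fin.cons_succ _ _ j
  rw [h]
  exact aeval_X_left_apply p

lemma ker_phi : RingHom.ker (phi k n) = Ideal.span {(X 0 : MvPolynomial (Fin (n+1)) k)} := by
  classical
  ext f
  rw [RingHom.mem_ker, Ideal.mem_span_singleton]
  set E := finSuccEquiv k n with hE
  have hcomp : phi k n = ((Polynomial.aeval (0 : MvPolynomial (Fin n) k)).restrictScalars k).comp
      E.toAlgHom := by
    apply MvPolynomial.algHom_ext
    intro i
    refine Fin.cases ?_ ?_ i
    · rw [phi_X_zero]
      simp [hE, finSuccEquiv_X_zero]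
    · intro j
      rw [phi_X_succ]
      simp [hE, finSuccEquiv_X_succ]
  constructor
  · intro h
    rw [hcomp] at h
    simp only [AlgHom.coe_comp, AlgHom.coe_restrictScalars', Function.comp_apply,
      AlgEquiv.toAlgHom_eq_coe, AlgHom.coe_coe] at h
    have hc : (E f).coeff 0 = 0 := by
      rw [Polynomial.coeff_zero_eq_eval_zero]
      rw [← Polynomial.coe_aeval_eq_eval]
      exact h
    have hdvd : Polynomial.X ∣ E f := Polynomial.X_dvd_iff.mpr hc
    have h2 := map_dvd E.symm hdvd
    rw [AlgEquiv.symm_apply_apply] at h2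
    have hx : E.symm Polynomial.X = X 0 := by
      rw [← finSuccEquiv_X_zero (R := k) (n := n), ← hE, AlgEquiv.symm_apply_apply]
    rwa [hx] at h2
  · rintro ⟨g, rfl⟩
    rw [map_mul, phi_X_zero, zero_mul]

end Hat
section Main
variable {n : ℕ}

noncomputable def homz (f : MvPolynomial (Fin n) k) : MvPolynomial (Fin (n+1)) k :=
  ∑ s ∈ f.support, monomial (emb (f.totalDegree - dg s) s) (coeff s f)

lemma homz_mem (A : Matrix (Fin d) (Fin n) ℤ) {f : MvPolynomial (Fin n) k}
    (hf : f ∈ Ideal.span (TS A (k := k))) :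
    homz f ∈ Ideal.span (TS (matrixHat A) (k := k)) := by
  classical
  rw [mem_span_TS_iff]
  intro t
  rw [homz, fib_finsum]
  simp_rw [fib_monomial]
  have key : ∀ s ∈ f.support,
      wt (matrixHat A) (emb (f.totalDegree - dg s) s)
        = Fin.cons ((f.totalDegree : ℤ)) (wt A s) := by
    intro s hs
    rw [wt_hat]
    congr 1
    have hle : dg s ≤ f.totalDegree := MvPolynomial.le_totalDegree hs
    rw [Nat.cast_sub hle]
    ring
  rw [Finset.sum_congr rfl (fun s hs => by rw [key s hs])]
  by_cases ht0 : t 0 = (f.totalDegree : ℤ)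
  · have hiff : ∀ s : Fin n →₀ ℕ,
        (Fin.cons ((f.totalDegree : ℤ)) (wt A s) = t) ↔ wt A s = Fin.tail t := by
      intro s
      constructor
      · intro h; rw [← h, Fin.tail_cons]
      · intro h
        funext i
        refine Fin.cases ?_ ?_ i
        · rw [Fin.cons_zero, ht0]
        · intro j
          rw [Fin.cons_succ, h]
          rfl
    rw [Finset.sum_congr rfl (fun s _ => if_congr (hiff s) rfl rfl)]
    exact fib_eq_zero_of_mem A hf (Fin.tail t)
  · refine Finset.sum_eq_zero fun s hs => if_neg fun hh => ht0 ?_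
    rw [← hh, Fin.cons_zero]

lemma phi_homz (f : MvPolynomial (Fin n) k) :
    phi k n (homz f) = homogeneousComponent f.totalDegree f := by
  classical
  rw [homz, map_sum]
  simp_rw [phi_monomial]
  rw [homogeneousComponent_apply, Finset.sum_filter]
  refine Finset.sum_congr rfl fun s hs => ?_
  have hle : dg s ≤ f.totalDegree := MvPolynomial.le_totalDegree hs
  have hiff : (f.totalDegree - dg s = 0) ↔ (Finsupp.degree s = f.totalDegree) := by
    rw [← dg_eq_degree]; omega
  by_cases h : Finsupp.degree s = f.totalDegree
  · rw [if_pos (hiff.mpr h), if_pos h]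
  · rw [if_neg (fun hh => h (hiff.mp hh)), if_neg h]

lemma phi_gen_mem (A : Matrix (Fin d) (Fin n) ℤ) {u v : Fin (n+1) →₀ ℕ}
    (hw : wt (matrixHat A) u = wt (matrixHat A) v) :
    phi k n (monomial u 1 - monomial v 1)
      ∈ initialIdeal (toricIdeal k A (id : Fin n → Fin n)) := by
  classical
  set su := Finsupp.equivFunOnFinite.symm fun j : Fin n => u j.succ with hsu
  set sv := Finsupp.equivFunOnFinite.symm fun j : Fin n => v j.succ with hsv
  have hu : u = emb (u 0) su := by rw [hsu]; exact (emb_tail u).symm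
  have hv : v = emb (v 0) sv := by rw [hsv]; exact (emb_tail v).symm
  rw [map_sub, hu, hv, phi_monomial, phi_monomial]
  rw [hu, hv, wt_hat, wt_hat] at hw
  have h0 : ((u 0 : ℕ) : ℤ) + (dg su : ℤ) = ((v 0 : ℕ) : ℤ) + (dg sv : ℤ) := by
    have h := congrFun hw 0
    rwa [Fin.cons_zero, Fin.cons_zero] at h
  have htail : wt A su = wt A sv := by
    funext j
    have h := congrFun hw j.succ
    rwa [Fin.cons_succ, Fin.cons_succ] at h
  have hgen : ∀ a b : Fin n →₀ ℕ, wt A a = wt A b →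
      ((monomial a 1 : MvPolynomial (Fin n) k) - monomial b 1)
        ∈ toricIdeal k A (id : Fin n → Fin n) := by
    intro a b hab
    rw [toricIdeal_eq_span_TS]
    exact Ideal.subset_span ⟨a, b, hab, rfl⟩
  by_cases hu0 : u 0 = 0 <;> by_cases hv0 : v 0 = 0
  · rw [if_pos hu0, if_pos hv0]
    by_cases hsuv : su = sv
    · rw [hsuv, sub_self]; exact Ideal.zero_mem _
    · have hdg : dg sv = dg su := by
        rw [hu0, hv0] at h0
        omega
      refine Ideal.subset_span ⟨monomial su 1 - monomial sv 1, hgen su sv htail, ?_⟩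
      rw [totalDegree_binom hsuv (le_of_eq hdg), map_sub, hc_monomial, hc_monomial,
        if_pos rfl, if_pos hdg]
  · rw [if_pos hu0, if_neg hv0, sub_zero]
    have hdg : dg sv < dg su := by
      rw [hu0] at h0
      omega
    have hne : su ≠ sv := fun h => by rw [h] at hdg; exact lt_irrefl _ hdg
    refine Ideal.subset_span ⟨monomial su 1 - monomial sv 1, hgen su sv htail, ?_⟩
    rw [totalDegree_binom hne (le_of_lt hdg), map_sub, hc_monomial, hc_monomial,
      if_pos rfl, if_neg (by omega : ¬ dg sv = dg su), sub_zero]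
  · rw [if_neg hu0, if_pos hv0, zero_sub]
    refine neg_mem ?_
    have hdg : dg su < dg sv := by
      rw [hv0] at h0
      omega
    have hne : sv ≠ su := fun h => by rw [h] at hdg; exact lt_irrefl _ hdg
    refine Ideal.subset_span ⟨monomial sv 1 - monomial su 1, hgen sv su htail.symm, ?_⟩
    rw [totalDegree_binom hne (le_of_lt hdg), map_sub, hc_monomial, hc_monomial,
      if_pos rfl, if_neg (by omega : ¬ dg su = dg sv), sub_zero]
  · rw [if_neg hu0, if_neg hv0, sub_self]
    exact Ideal.zero_mem _

end Main

end St6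

/-- There is a `k`-algebra isomorphism
`k[ξ₁,…,ξₙ]/in(I_A) ≅ k[ξ₀,ξ₁,…,ξₙ]/(I_Â + ⟨ξ₀⟩)`, where `in(I_A)` is the
initial ideal of `I_A` with respect to total degree and `Â` is the
homogenization of `A`. -/
theorem initial_ideal_quotient_iso_homogenized
    (k : Type*) [Field k] (d n : ℕ) (A : Matrix (Fin d) (Fin n) ℤ) :
    Nonempty
      ((MvPolynomial (Fin n) k ⧸ initialIdeal (toricIdeal k A (id : Fin n → Fin n)))
        ≃ₐ[k]
      (MvPolynomial (Fin (n + 1)) k ⧸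
        (toricIdeal k (matrixHat A) (id : Fin (n + 1) → Fin (n + 1)) +
          Ideal.span {X (0 : Fin (n + 1))}))) := by
  classical
  open St6 in
  set IA := toricIdeal k A (id : Fin n → Fin n) with hIA
  set ψ : MvPolynomial (Fin (n+1)) k →ₐ[k] (MvPolynomial (Fin n) k ⧸ initialIdeal IA) :=
    (Ideal.Quotient.mkₐ k (initialIdeal IA)).comp (St6.phi k n) with hψ
  have hsurj : Function.Surjective ψ := by
    rw [hψ]
    exact (Ideal.Quotient.mkₐ_surjective k _).comp St6.phi_surjective
  have hker : RingHom.ker ψ =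
      toricIdeal k (matrixHat A) (id : Fin (n+1) → Fin (n+1)) + Ideal.span {X 0} := by
    apply le_antisymm
    · intro f hf
      rw [RingHom.mem_ker] at hf
      have hφf : St6.phi k n f ∈ initialIdeal IA := by
        have h : Ideal.Quotient.mk (initialIdeal IA) (St6.phi k n f) = 0 := hf
        rwa [Ideal.Quotient.eq_zero_iff_mem] at h
      have claim : ∀ h ∈ initialIdeal IA,
          ∃ g ∈ Ideal.span (St6.TS (matrixHat A) (k := k)), St6.phi k n g = h := by
        intro h hh
        unfold initialIdeal at hh
        refine Submodule.span_induction ?_ ?_ ?_ ?_ hh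
        · rintro x ⟨f', hf', rfl⟩
          rw [hIA, St6.toricIdeal_eq_span_TS] at hf'
          exact ⟨St6.homz f', St6.homz_mem A hf', St6.phi_homz f'⟩
        · exact ⟨0, Ideal.zero_mem _, map_zero _⟩
        · rintro x y _ _ ⟨g1, hg1, rfl⟩ ⟨g2, hg2, rfl⟩
          exact ⟨g1 + g2, Ideal.add_mem _ hg1 hg2, map_add _ _ _⟩
        · rintro r x _ ⟨g, hg, rfl⟩
          obtain ⟨r', hr'⟩ := St6.phi_surjective (k := k) (n := n) r
          exact ⟨r' * g, Ideal.mul_mem_left _ _ hg, by rw [map_mul, hr', smul_eq_mul]⟩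
      obtain ⟨g, hg, hgf⟩ := claim _ hφf
      have hfg : f - g ∈ Ideal.span {(X 0 : MvPolynomial (Fin (n+1)) k)} := by
        rw [← St6.ker_phi, RingHom.mem_ker, map_sub, hgf]
        exact sub_self _
      rw [Submodule.add_eq_sup]
      refine Submodule.mem_sup.mpr ⟨g, ?_, f - g, hfg, by ring⟩
      rw [St6.toricIdeal_eq_span_TS]
      exact hg
    · rw [Submodule.add_eq_sup]
      refine sup_le ?_ ?_
      · rw [St6.toricIdeal_eq_span_TS, Ideal.span_le]
        rintro g ⟨u, v, hw, rfl⟩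
        rw [SetLike.mem_coe, RingHom.mem_ker, hψ, AlgHom.comp_apply,
          Ideal.Quotient.mkₐ_eq_mk, Ideal.Quotient.eq_zero_iff_mem]
        exact St6.phi_gen_mem A hw
      · rw [Ideal.span_le]
        rintro g hg
        rw [Set.mem_singleton_iff] at hg
        subst hg
        rw [SetLike.mem_coe, RingHom.mem_ker, hψ, AlgHom.comp_apply, St6.phi_X_zero,
          map_zero]
  have e := Ideal.quotientKerAlgEquivOfSurjective hsurj
  exact ⟨e.symm.trans (Ideal.quotientEquivAlgOfEq k hker)⟩
end
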